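/- Let {S_i}_{i∈I} be an inverse system of spectral spaces over a directed partially ordered set I, with quasi-compact surjective transition maps, and let S = lim_i S_i. Then for every i ∈ I, the natural map π₀(S) → π₀(S_i) on spaces of connected components, induced by the projection pr_i: S → S_i, is surjective. -/

import Mathlib

open Set TopologicalSpace Filter Topology


/-- A topological space is *spectral* if it is quasi-compact, T0, sober, and the
quasi-compact open subsets are stable under finite intersections and form a basis. -/
def IsSpectralSpace (X : Type*) [TopologicalSpace X] : Prop :=
  CompactSpace X ∧ T0Space X ∧ QuasiSober X ∧
    (∀ U V : Set X, IsOpen U → IsCompact U → IsOpen V → IsCompact V → IsCompact (U ∩ V)) ∧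
    TopologicalSpace.IsTopologicalBasis {U : Set X | IsOpen U ∧ IsCompact U}

/-- Type synonym carrying the patch (constructible) topology. -/
def SpecPatch (X : Type*) := X

/-- The generating set for the patch topology: quasi-compact opens and their complements. -/
def patchGen (X : Type*) [TopologicalSpace X] : Set (Set X) :=
  {A : Set X | (IsOpen A ∧ IsCompact A) ∨ ∃ U : Set X, IsOpen U ∧ IsCompact U ∧ A = Uᶜ}

instance SpecPatch.instTop (X : Type*) [TopologicalSpace X] : TopologicalSpace (SpecPatch X) :=
  generateFrom (patchGen X)

lemma SpecPatch.isOpen_basic {X : Type*} [TopologicalSpace X] {A : Set X} (hA : A ∈ patchGen X) :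
    IsOpen (show Set (SpecPatch X) from A) :=
  isOpen_generateFrom_of_mem hA

/-- The patch topology on a spectral space is Hausdorff. -/
lemma SpecPatch.t2 {X : Type*} [TopologicalSpace X] (h : IsSpectralSpace X) :
    T2Space (SpecPatch X) := by
  obtain ⟨hcs, ht0, hsob, hint, hbasis⟩ := h
  haveI := ht0
  constructor
  intro x y hxy
  have hins : ¬ @Inseparable X _ x y := fun hc => hxy hc.eq
  replace hins := mt inseparable_iff_forall_isOpen.mpr hins
  push_neg at hins
  obtain ⟨s, hs, hxs⟩ := hins
  have key : ∀ a b : X, a ∈ s → b ∉ s →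
      ∃ u v : Set (SpecPatch X), IsOpen u ∧ IsOpen v ∧ a ∈ u ∧ b ∈ v ∧ Disjoint u v := by
    intro a b ha hb
    obtain ⟨V, hV, haV, hVs⟩ := hbasis.exists_subset_of_mem_open ha hs
    have h1 : V ∈ patchGen X := Or.inl hV
    have h2 : Vᶜ ∈ patchGen X := Or.inr ⟨V, hV.1, hV.2, rfl⟩
    exact ⟨V, Vᶜ, SpecPatch.isOpen_basic (X := X) h1, SpecPatch.isOpen_basic (X := X) h2,
      haV, fun hbV => hb (hVs hbV), disjoint_compl_right⟩
  rcases hxs with ⟨hx, hy⟩ | ⟨hx, hy⟩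
  · exact key x y hx hy
  · obtain ⟨u, v, hu, hv, hyu, hxv, hd⟩ := key y x hy hx
    exact ⟨v, u, hv, hu, hxv, hyu, hd.symm⟩

/-- The patch topology on a spectral space is compact. -/
lemma SpecPatch.compactSpace {X : Type*} [TopologicalSpace X] (h : IsSpectralSpace X) :
    CompactSpace (SpecPatch X) := by
  obtain ⟨hcs, ht0, hsob, hint, hbasis⟩ := h
  haveI := hcs
  refine ⟨isCompact_iff_ultrafilter_le_nhds.mpr ?_⟩
  intro F _
  set G : Ultrafilter X := F with hG
  set Z : Set X := {x : X | ∀ U : Set X, IsOpen U → IsCompact U → x ∈ U → U ∈ G} with hZdef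
  have key : ∀ U : Set X, IsOpen U → IsCompact U → U ∈ G → (U ∩ Z).Nonempty := by
    intro U hUo hUc hUG
    by_contra hne
    rw [not_nonempty_iff_eq_empty] at hne
    have hcov : ∀ x ∈ U, ∃ V : Set X, IsOpen V ∧ IsCompact V ∧ V ∉ G ∧ x ∈ V := by
      intro x hxU
      have hxZ : x ∉ Z := fun hxZ => (eq_empty_iff_forall_notMem.mp hne x) ⟨hxU, hxZ⟩
      simp only [hZdef, mem_setOf_eq, not_forall] at hxZ
      obtain ⟨V, hVo, hVc, hxV, hVG⟩ := hxZ
      exact ⟨V, hVo, hVc, hVG, hxV⟩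
    set ι := {V : Set X // IsOpen V ∧ IsCompact V ∧ V ∉ G}
    have hsub : U ⊆ ⋃ V : ι, (V : Set X) := by
      intro x hx
      obtain ⟨V, h1, h2, h3, h4⟩ := hcov x hx
      exact mem_iUnion.mpr ⟨⟨V, h1, h2, h3⟩, h4⟩
    obtain ⟨t, ht⟩ := hUc.elim_finite_subcover (fun V : ι => (V : Set X))
      (fun V => V.2.1) hsub
    have hmem : ⋃ V ∈ t, (V : Set X) ∈ G := Filter.mem_of_superset hUG ht
    obtain ⟨V, hVt, hVG⟩ := (Ultrafilter.finite_biUnion_mem_iff t.finite_toSet).mp hmem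
    exact V.2.2.2 hVG
  have hZcl : IsClosed Z := by
    rw [← isOpen_compl_iff, isOpen_iff_forall_mem_open]
    intro x hx
    simp only [hZdef, mem_compl_iff, mem_setOf_eq, not_forall] at hx
    obtain ⟨V, hVo, hVc, hxV, hVG⟩ := hx
    refine ⟨V, fun w hw hwZ => hVG (hwZ V hVo hVc hw), hVo, hxV⟩
  have hZne : Z.Nonempty := by
    obtain ⟨w, _, hwZ⟩ := key univ isOpen_univ isCompact_univ univ_mem
    exact ⟨w, hwZ⟩
  have hZirr : IsIrreducible Z := by
    refine ⟨hZne, fun u v hu hv ⟨a, haZ, hau⟩ ⟨b, hbZ, hbv⟩ => ?_⟩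
    obtain ⟨V1, hV1, haV1, hV1u⟩ := hbasis.exists_subset_of_mem_open hau hu
    obtain ⟨V2, hV2, hbV2, hV2v⟩ := hbasis.exists_subset_of_mem_open hbv hv
    have h1G : V1 ∈ G := haZ V1 hV1.1 hV1.2 haV1
    have h2G : V2 ∈ G := hbZ V2 hV2.1 hV2.2 hbV2
    obtain ⟨w, hw12, hwZ⟩ := key (V1 ∩ V2) (hV1.1.inter hV2.1)
      (hint V1 V2 hV1.1 hV1.2 hV2.1 hV2.2) (Filter.inter_mem h1G h2G)
    exact ⟨w, hwZ, hV1u hw12.1, hV2v hw12.2⟩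
  obtain ⟨z, hz⟩ := hsob.sober hZirr hZcl
  refine ⟨(z : SpecPatch X), ?_⟩
  have hnhds : @nhds (SpecPatch X) (generateFrom (patchGen X)) z
      = ⨅ s ∈ {s | z ∈ s ∧ s ∈ patchGen X}, 𝓟 s :=
    nhds_generateFrom
  have hle : ↑F ≤ ⨅ s ∈ {s : Set (SpecPatch X) | z ∈ s ∧ s ∈ patchGen X}, 𝓟 s := by
    refine le_iInf₂ fun s hs => le_principal_iff.mpr ?_
    obtain ⟨hzs, hsg⟩ := hs
    rcases hsg with ⟨hso, hsc⟩ | ⟨U, hUo, hUc, rfl⟩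
    · exact hz.mem s hso hsc hzs
    · have hUZ : U ∩ Z = ∅ := by
        rw [eq_empty_iff_forall_notMem]
        rintro w ⟨hwU, hwZ⟩
        rw [← hz] at hwZ
        obtain ⟨_, hmem, rfl⟩ := mem_closure_iff.mp hwZ U hUo hwU
        exact hzs hmem
      have hUG : U ∉ G := fun hUG => by
        obtain ⟨w, hw⟩ := key U hUo hUc hUG
        exact (eq_empty_iff_forall_notMem.mp hUZ w) hw
      exact Ultrafilter.compl_mem_iff_notMem.mpr hUG
  exact ⟨trivial, le_of_le_of_eq hle hnhds.symm⟩

/-- A continuous quasi-compact map is continuous for the patch topologies. -/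
lemma SpecPatch.continuous {X Y : Type*} [TopologicalSpace X] [TopologicalSpace Y]
    {f : X → Y} (hf : Continuous f)
    (hqc : ∀ U : Set Y, IsOpen U → IsCompact U → IsCompact (f ⁻¹' U)) :
    Continuous (show SpecPatch X → SpecPatch Y from f) := by
  rw [show (SpecPatch.instTop Y) = generateFrom (patchGen Y) from rfl]
  refine continuous_generateFrom_iff.mpr ?_
  rintro s (⟨hso, hsc⟩ | ⟨U, hUo, hUc, rfl⟩)
  · have h1 : f ⁻¹' s ∈ patchGen X := Or.inl ⟨hso.preimage hf, hqc _ hso hsc⟩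
    exact SpecPatch.isOpen_basic (X := X) h1
  · have h1 : f ⁻¹' Uᶜ ∈ patchGen X :=
      Or.inr ⟨f ⁻¹' U, hUo.preimage hf, hqc U hUo hUc, by rw [Set.preimage_compl]⟩
    exact SpecPatch.isOpen_basic (X := X) h1

/-- Let `{S i}` be an inverse system of spectral spaces over a directed
partially ordered set, with quasi-compact surjective continuous transition maps, and let
`S = lim_i S i`.  Then for every `i`, the natural (continuous) map `π₀(S) → π₀(S i)`
induced by the projection `pr_i : S → S i` is surjective. -/
theorem stmt_7 {I : Type*} [PartialOrder I] [IsDirected I (· ≤ ·)]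
    (S : I → Type*) [∀ i, TopologicalSpace (S i)]
    (p : ∀ {i j : I}, j ≤ i → S i → S j)
    (hp_id : ∀ (i : I) (x : S i), p (le_refl i) x = x)
    (hp_comp : ∀ {i j k : I} (hij : j ≤ i) (hjk : k ≤ j) (x : S i),
      p hjk (p hij x) = p (hjk.trans hij) x)
    (hcont : ∀ (i j : I) (h : j ≤ i), Continuous (p h))
    (hspectral : ∀ i : I, IsSpectralSpace (S i))
    (hqc : ∀ (i j : I) (h : j ≤ i) (U : Set (S j)), IsOpen U → IsCompact U →
      IsCompact (p h ⁻¹' U))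
    (hsurj : ∀ (i j : I) (h : j ≤ i), Function.Surjective (p h)) :
    ∀ i : I, ∃ q : ConnectedComponents
        {x : ∀ i, S i // ∀ (i j : I) (h : j ≤ i), p h (x i) = x j} →
        ConnectedComponents (S i),
      Continuous q ∧
      (∀ x : {x : ∀ i, S i // ∀ (i j : I) (h : j ≤ i), p h (x i) = x j},
        q (ConnectedComponents.mk x) = ConnectedComponents.mk (x.1 i)) ∧
      Function.Surjective q := by
  intro i
  set T := {x : ∀ i, S i // ∀ (i j : I) (h : j ≤ i), p h (x i) = x j} with hT
  have hprc : Continuous (fun x : T => x.1 i) := (continuous_apply i).comp continuous_subtype_val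
  -- key fact: the projection to the `i`-th factor is surjective
  have hprsurj : ∀ y : S i, ∃ x : T, x.1 i = y := by
    intro y
    classical
    haveI : Nonempty I := ⟨i⟩
    haveI hT2 : ∀ j, T2Space (SpecPatch (S j)) := fun j => SpecPatch.t2 (hspectral j)
    haveI hCpt : ∀ j, CompactSpace (SpecPatch (S j)) := fun j =>
      SpecPatch.compactSpace (hspectral j)
    haveI hNe : ∀ j, Nonempty (S j) := by
      intro j
      obtain ⟨m, hjm, him⟩ := exists_ge_ge j i
      obtain ⟨z, -⟩ := hsurj m i him y
      exact ⟨p hjm z⟩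
    -- the closed conditions inside the product of the patch spaces
    set P := ∀ j, SpecPatch (S j) with hP
    set Z : Option ((j : I) × (k : I) × PLift (k ≤ j)) → Set P := fun a =>
      match a with
      | none => {x : P | x i = (show SpecPatch (S i) from y)}
      | some ⟨j, k, h⟩ =>
        {x : P | (show SpecPatch (S k) from p h.down (show S j from x j)) = x k} with hZ
    have hZc : ∀ a, IsClosed (Z a) := by
      rintro (_ | ⟨j, k, h⟩)
      · show IsClosed ((fun x : P => x i) ⁻¹' {(y : SpecPatch (S i))})
        exact IsClosed.preimage (continuous_apply i)
          (isClosed_singleton (X := SpecPatch (S i)))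
      · exact isClosed_eq
          ((SpecPatch.continuous (hcont j k h.down) (hqc j k h.down)).comp (continuous_apply j))
          (continuous_apply k)
    have hne : (⋂ a, Z a).Nonempty := by
      by_contra hemp
      rw [not_nonempty_iff_eq_empty] at hemp
      obtain ⟨t, ht⟩ := isCompact_univ.elim_finite_subfamily_closed Z hZc
        (by rw [univ_inter, hemp])
      -- collect all indices involved in `t`
      set s : Finset I := insert i (t.biUnion fun a =>
        match a with
        | none => ({i} : Finset I)
        | some ⟨j, k, _⟩ => ({j, k} : Finset I)) with hs
      obtain ⟨m, hm⟩ := s.exists_le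
      have him : i ≤ m := hm i (Finset.mem_insert_self _ _)
      obtain ⟨z, hz⟩ := hsurj m i him y
      set x : P := fun j => if h : j ≤ m then p h z else Classical.arbitrary (S j) with hx
      have hxmem : ∀ a ∈ t, x ∈ Z a := by
        rintro (_ | ⟨j, k, h⟩) ha
        · show x i = (show SpecPatch (S i) from y)
          simp only [hx]
          exact (dif_pos him).trans hz
        · have hjm : j ≤ m := hm j (Finset.mem_insert_of_mem (Finset.mem_biUnion.mpr
            ⟨some ⟨j, k, h⟩, ha, by simp⟩))
          have hkm : k ≤ m := hm k (Finset.mem_insert_of_mem (Finset.mem_biUnion.mpr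
            ⟨some ⟨j, k, h⟩, ha, by simp⟩))
          show (show SpecPatch (S k) from p h.down (show S j from x j)) = x k
          simp only [hx]
          exact (congrArg (p h.down) (dif_pos hjm)).trans
            ((hp_comp hjm h.down z).trans (dif_pos (α := S k) (t := fun h => p h z)
              (e := fun _ => Classical.arbitrary (S k)) hkm).symm)
      have hxmem' : x ∈ (univ : Set P) ∩ ⋂ a ∈ t, Z a :=
        ⟨trivial, mem_iInter₂.mpr hxmem⟩
      rw [ht] at hxmem'
      exact hxmem'
    obtain ⟨x, hx⟩ := hne
    rw [mem_iInter] at hx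
    exact ⟨⟨x, fun j k h => hx (some ⟨j, k, ⟨h⟩⟩)⟩, hx none⟩
  refine ⟨hprc.connectedComponentsMap, hprc.connectedComponentsMap_continuous,
    fun x => rfl, ?_⟩
  intro c
  obtain ⟨y, rfl⟩ := ConnectedComponents.surjective_coe c
  obtain ⟨x, hx⟩ := hprsurj y
  exact ⟨ConnectedComponents.mk x, by rw [show hprc.connectedComponentsMap
    (ConnectedComponents.mk x) = ConnectedComponents.mk (x.1 i) from rfl, hx]⟩
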